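/- Let α ∈ (0,1)∪(1,4] and set d₁ = (−3α + √(3α(4−α)))/(2(1−α)) and d₂ = (−3α − √(3α(4−α)))/(2(1−α)). If d₁ and d₂ are irrational, then for all integers n, n₁, n₂ with n = n₁ + n₂, n ≠ 0, and α n³ − n₁³ − α n₂³ = 0, one has n₁ = 0 and n₂ = n. -/

import Mathlib

theorem stmt_5 (α : ℝ) (hα : 0 < α) (hα4 : α ≤ 4) (hα1 : α ≠ 1)
    (d₁ d₂ : ℝ)
    (hd₁ : d₁ = (-3 * α + Real.sqrt (3 * α * (4 - α))) / (2 * (1 - α)))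
    (hd₂ : d₂ = (-3 * α - Real.sqrt (3 * α * (4 - α))) / (2 * (1 - α)))
    (hirr₁ : Irrational d₁) (hirr₂ : Irrational d₂) :
    ∀ n n₁ n₂ : ℤ, n = n₁ + n₂ → n ≠ 0 →
      α * (n : ℝ) ^ 3 - (n₁ : ℝ) ^ 3 - α * (n₂ : ℝ) ^ 3 = 0 →
      n₁ = 0 ∧ n₂ = n := by
  intro n n₁ n₂ hsum hn h
  have hn' : (n : ℝ) ≠ 0 := Int.cast_ne_zero.mpr hn
  have hsum' : (n₂ : ℝ) = (n : ℝ) - (n₁ : ℝ) := by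
    have : (n : ℝ) = (n₁ : ℝ) + (n₂ : ℝ) := by exact_mod_cast congrArg (Int.cast : ℤ → ℝ) hsum
    linarith
  rw [hsum'] at h
  have hfac : (n₁ : ℝ) * ((α - 1) * (n₁ : ℝ) ^ 2 - 3 * α * (n : ℝ) * (n₁ : ℝ) + 3 * α * (n : ℝ) ^ 2) = 0 := by
    linear_combination h
  have h1α : (1 - α) ≠ 0 := fun hc => hα1 (by linarith [sub_eq_zero.mp hc])
  have h2α : (2 : ℝ) * (1 - α) ≠ 0 := mul_ne_zero two_ne_zero h1α
  rcases mul_eq_zero.mp hfac with h0 | hq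
  · have hn₁ : n₁ = 0 := by exact_mod_cast h0
    refine ⟨hn₁, ?_⟩
    omega
  · exfalso
    set q : ℝ := (n₁ : ℝ) / (n : ℝ) with hqdef
    set s : ℝ := Real.sqrt (3 * α * (4 - α)) with hsdef
    have hquad : (α - 1) * q ^ 2 - 3 * α * q + 3 * α = 0 := by
      have e : (α - 1) * q ^ 2 - 3 * α * q + 3 * α =
          ((α - 1) * (n₁ : ℝ) ^ 2 - 3 * α * (n : ℝ) * (n₁ : ℝ) + 3 * α * (n : ℝ) ^ 2) / (n : ℝ) ^ 2 := by
        rw [hqdef]; field_simp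
      rw [e, hq, zero_div]
    have hs : s ^ 2 = 3 * α * (4 - α) := Real.sq_sqrt (by nlinarith)
    have e₁ : 2 * (1 - α) * d₁ = -3 * α + s := by
      rw [hd₁]; field_simp
    have e₂ : 2 * (1 - α) * d₂ = -3 * α - s := by
      rw [hd₂]; field_simp
    have hne : (4 : ℝ) * (1 - α) ^ 2 ≠ 0 :=
      mul_ne_zero (by norm_num) (pow_ne_zero _ h1α)
    have key : (q - d₁) * (q - d₂) = 0 := by
      have hz : (4 : ℝ) * (1 - α) ^ 2 * ((q - d₁) * (q - d₂)) = 0 := by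
        linear_combination (-(2 * (1 - α) * q - 2 * (1 - α) * d₂)) * e₁ +
          (-(2 * (1 - α) * q + 3 * α - s)) * e₂ - hs + (-4 * (1 - α)) * hquad
      exact (mul_eq_zero.mp hz).resolve_left hne
    have hqrat : ∃ r : ℚ, (r : ℝ) = q := ⟨(n₁ : ℚ) / (n : ℚ), by push_cast; rfl⟩
    rcases mul_eq_zero.mp key with h₁ | h₂
    · obtain ⟨r, hr⟩ := hqrat
      exact hirr₁ ⟨r, by rw [hr, sub_eq_zero.mp h₁]⟩
    · obtain ⟨r, hr⟩ := hqrat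
      exact hirr₂ ⟨r, by rw [hr, sub_eq_zero.mp h₂]⟩
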